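/- The 5-dimensional nilpotent commutative associative algebra A₀₃ does not degenerate to A₀₅: the structure λ of A₀₅ does NOT lie in the closure of the GL(5,ℂ)-orbit O(μ) of the structure μ of A₀₃ (closure in the standard topology on the space of bilinear maps ℂ⁵ × ℂ⁵ → ℂ⁵). -/
import Mathlib


open ContinuousLinearMap

/-- The underlying space `ℂⁿ`. -/
abbrev Vn (n : ℕ) := Fin n → ℂ

/-- The space of bilinear maps `ℂⁿ × ℂⁿ → ℂⁿ` (as continuous linear maps in two
arguments), carrying its standard topology as a finite-dimensional complex vector space. -/
abbrev Bil (n : ℕ) := Vn n →L[ℂ] Vn n →L[ℂ] Vn n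

/-- The action of `GL(n, ℂ)` on bilinear maps: `(g · μ)(x, y) = g (μ (g⁻¹ x) (g⁻¹ y))`. -/
noncomputable def act {n : ℕ} (g : Vn n ≃L[ℂ] Vn n) (μ : Bil n) : Bil n :=
  ((compL ℂ (Vn n) (Vn n) (Vn n)).flip (g.symm : Vn n →L[ℂ] Vn n)).comp
    (((compL ℂ (Vn n) (Vn n) (Vn n)) (g : Vn n →L[ℂ] Vn n)).comp
      (μ.comp (g.symm : Vn n →L[ℂ] Vn n)))

@[simp] lemma act_apply {n : ℕ} (g : Vn n ≃L[ℂ] Vn n) (μ : Bil n) (x y : Vn n) :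
    act g μ x y = g (μ (g.symm x) (g.symm y)) := rfl

/-- The orbit `O(μ)` of a bilinear map under the `GL(n, ℂ)`-action. -/
noncomputable def orbit {n : ℕ} (μ : Bil n) : Set (Bil n) :=
  {ν | ∃ g : Vn n ≃L[ℂ] Vn n, ν = act g μ}

/-- The standard basis `e₁, …, e₅` of `ℂ⁵` (zero-indexed: `e i` is `e_{i+1}`). -/
def e (i : Fin 5) : Vn 5 := Pi.single i 1

/-- Multiplication table of the algebra `𝐀03` (entry `(i, j)` is `eᵢ · eⱼ`). -/
def tblA03 : Fin 5 → Fin 5 → Vn 5 :=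
  ![![e 2, 0, e 4, 0, 0],
   ![0, e 3, 0, e 4, 0],
   ![e 4, 0, 0, 0, 0],
   ![0, e 4, 0, 0, 0],
   ![0, 0, 0, 0, 0]]

/-- Multiplication table of the algebra `𝐀05` (entry `(i, j)` is `eᵢ · eⱼ`). -/
def tblA05 : Fin 5 → Fin 5 → Vn 5 :=
  ![![e 1, e 2, e 3, 0, 0],
   ![e 2, e 3, 0, 0, 0],
   ![e 3, 0, 0, 0, 0],
   ![0, 0, 0, 0, 0],
   ![0, 0, 0, 0, 0]]

/-- Every vector of `ℂ⁵` is the evident combination of the standard basis vectors. -/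
lemma expand_basis (v : Vn 5) :
    v = v 0 • e 0 + v 1 • e 1 + v 2 • e 2 + v 3 • e 3 + v 4 • e 4 := by
  ext j; fin_cases j <;> simp [e, Pi.single_apply]

/-- For any fixed vectors, the triple product evaluated at a bilinear map is continuous
in the bilinear map. -/
lemma continuous_triple (x y z : Vn 5) (i : Fin 5) :
    Continuous fun ν : Bil 5 => (ν (ν x y) z) i := by
  have h1 : Continuous fun ν : Bil 5 => ν x y :=
    ((ContinuousLinearMap.apply ℂ (Vn 5) y).continuous.comp
      (ContinuousLinearMap.apply ℂ (Vn 5 →L[ℂ] Vn 5) x).continuous)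
  have h2 : Continuous fun ν : Bil 5 => ν (ν x y) :=
    isBoundedBilinearMap_apply.continuous.comp (continuous_id.prodMk h1)
  exact (continuous_apply i).comp
    ((ContinuousLinearMap.apply ℂ (Vn 5) z).continuous.comp h2)

/-- The $5$-dimensional nilpotent commutative associative algebra `𝐀03` does not degenerate to
`𝐀05`: the structure `λ` of `𝐀05` does NOT lie in the closure of
the `GL(5, ℂ)`-orbit `O(μ)` of the structure `μ` of `𝐀03`. -/
theorem A03_not_deg_A05 (μ lam : Bil 5)
    (hμ : ∀ i j : Fin 5, μ (e i) (e j) = tblA03 i j)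
    (hlam : ∀ i j : Fin 5, lam (e i) (e j) = tblA05 i j) :
    lam ∉ closure (orbit μ) := by
  intro hcl
  -- The closed invariant set: all triple products are pairwise "parallel" in coords 2,3.
  set S : Set (Bil 5) := {ν | ∀ x y z u v w : Vn 5,
      (ν (ν x y) z) 2 * (ν (ν u v) w) 3 = (ν (ν x y) z) 3 * (ν (ν u v) w) 2} with hS
  have hSclosed : IsClosed S := by
    have : S = ⋂ (x : Vn 5), ⋂ (y : Vn 5), ⋂ (z : Vn 5), ⋂ (u : Vn 5), ⋂ (v : Vn 5),
        ⋂ (w : Vn 5), {ν : Bil 5 |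
          (ν (ν x y) z) 2 * (ν (ν u v) w) 3 = (ν (ν x y) z) 3 * (ν (ν u v) w) 2} := by
      ext ν; simp [hS, Set.mem_iInter]
    rw [this]
    refine isClosed_iInter fun x => isClosed_iInter fun y => isClosed_iInter fun z =>
      isClosed_iInter fun u => isClosed_iInter fun v => isClosed_iInter fun w =>
      isClosed_eq ?_ ?_
    · exact (continuous_triple x y z 2).mul (continuous_triple u v w 3)
    · exact (continuous_triple x y z 3).mul (continuous_triple u v w 2)
  -- all triple products of μ lie on the line spanned by e 4
  have key : ∀ a b c : Vn 5, ∃ s : ℂ, μ (μ a b) c = s • e 4 := by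
    intro a b c
    rw [expand_basis a, expand_basis b, expand_basis c]
    simp only [map_add, map_smul, ContinuousLinearMap.add_apply, ContinuousLinearMap.coe_smul',
      Pi.smul_apply, hμ, tblA03, Matrix.cons_val_zero, Matrix.cons_val_one, Matrix.head_cons,
      Matrix.cons_val_two, Matrix.tail_cons, Matrix.cons_val_three, Matrix.cons_val_four,
      map_zero, smul_zero, zero_add, add_zero, ContinuousLinearMap.zero_apply,
      ContinuousLinearMap.map_smul]
    exact ⟨c 0 * b 0 * a 0 + c 1 * b 1 * a 1, by module⟩
  have hsub : orbit μ ⊆ S := by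
    rintro ν ⟨g, rfl⟩ x y z u v w
    have tri : ∀ p q r : Vn 5, ∃ s : ℂ,
        act g μ (act g μ p q) r = s • g (e 4) := by
      intro p q r
      obtain ⟨s, hs⟩ := key (g.symm p) (g.symm q) (g.symm r)
      refine ⟨s, ?_⟩
      simp only [act_apply, ContinuousLinearEquiv.symm_apply_apply, hs, map_smul]
    obtain ⟨s1, h1⟩ := tri x y z
    obtain ⟨s2, h2⟩ := tri u v w
    rw [h1, h2]
    simp only [Pi.smul_apply, smul_eq_mul]
    ring
  have hlamS : lam ∈ S := closure_minimal hsub hSclosed hcl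
  have := hlamS (e 0) (e 0) (e 0) (e 0) (e 1) (e 0)
  rw [hlam 0 0] at this
  simp only [tblA03, tblA05, Matrix.cons_val_zero, Matrix.cons_val_one, Matrix.head_cons] at this
  rw [hlam 1 0, hlam 0 1] at this
  simp only [tblA05, Matrix.cons_val_zero, Matrix.cons_val_one, Matrix.head_cons] at this
  rw [hlam 2 0] at this
  simp [tblA05, e, Pi.single_apply] at this
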